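/- arXiv:1310.8107 — 4 statements merged into one kernel-verified Lean document; each statement's English description precedes it below -/
import Mathlib

section
/- Let M ≥ N. A frame Φ = {φ_k}_{k=1}^{M} for ℝ^N is N-scalable (i.e., some N-element subset of Φ can be rescaled by nonnegative scalars to a tight frame for ℝ^N) if and only if Φ contains an orthogonal basis of ℝ^N, i.e., there is a subset of N frame vectors that are nonzero and pairwise orthogonal. -/
open scoped BigOperators

namespace ScalableFrames

/-- The Euclidean dot product on `Fin n → ℝ`. -/
def dot {n : ℕ} (x y : Fin n → ℝ) : ℝ := ∑ i, x i * y i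

/-- `Φ = {φ_k}_{k=1}^M` is a frame for `ℝ^N`:
there are `0 < A, B` with `A‖x‖² ≤ ∑_k ⟨x, φ_k⟩² ≤ B‖x‖²` for all `x`. -/
def IsFrame {M N : ℕ} (Φ : Fin M → Fin N → ℝ) : Prop :=
  ∃ A B : ℝ, 0 < A ∧ 0 < B ∧ ∀ x : Fin N → ℝ,
    A * dot x x ≤ ∑ k, dot x (Φ k) ^ 2 ∧ ∑ k, dot x (Φ k) ^ 2 ≤ B * dot x x

/-- `Φ` is a tight frame for `ℝ^N` (the frame inequality holds with `A = B > 0`). -/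
def IsTight {M N : ℕ} (Φ : Fin M → Fin N → ℝ) : Prop :=
  ∃ A : ℝ, 0 < A ∧ ∀ x : Fin N → ℝ, ∑ k, dot x (Φ k) ^ 2 = A * dot x x

/-- The subfamily `{φ_i}_{i ∈ I}` is a tight frame for `ℝ^N`. -/
def IsTightOn {M N : ℕ} (Φ : Fin M → Fin N → ℝ) (I : Finset (Fin M)) : Prop :=
  ∃ A : ℝ, 0 < A ∧ ∀ x : Fin N → ℝ, ∑ k ∈ I, dot x (Φ k) ^ 2 = A * dot x x

/-- `Φ` is scalable: nonnegative scalars `c_k` make `{c_k φ_k}` a tight frame. -/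
def IsScalable {M N : ℕ} (Φ : Fin M → Fin N → ℝ) : Prop :=
  ∃ c : Fin M → ℝ, (∀ k, 0 ≤ c k) ∧ IsTight fun k => c k • Φ k

/-- `Φ` is strictly scalable: strictly positive scalars `c_k` make `{c_k φ_k}` a tight frame. -/
def IsStrictlyScalable {M N : ℕ} (Φ : Fin M → Fin N → ℝ) : Prop :=
  ∃ c : Fin M → ℝ, (∀ k, 0 < c k) ∧ IsTight fun k => c k • Φ k

/-- `Φ` is `m`-scalable: some subset `I` of size `m` admits nonnegative scalars `(c_i)_{i∈I}`
making `{c_i φ_i}_{i∈I}` a tight frame for `ℝ^N`. -/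
def IsMScalable {M N : ℕ} (Φ : Fin M → Fin N → ℝ) (m : ℕ) : Prop :=
  ∃ I : Finset (Fin M), I.card = m ∧
    ∃ c : Fin M → ℝ, (∀ i ∈ I, 0 ≤ c i) ∧ IsTightOn (fun k => c k • Φ k) I

/-- `Φ` is strictly `m`-scalable: some subset `I` of size `m` admits strictly positive scalars
`(c_i)_{i∈I}` making `{c_i φ_i}_{i∈I}` a tight frame for `ℝ^N`. -/
def IsStrictlyMScalable {M N : ℕ} (Φ : Fin M → Fin N → ℝ) (m : ℕ) : Prop :=
  ∃ I : Finset (Fin M), I.card = m ∧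
    ∃ c : Fin M → ℝ, (∀ i ∈ I, 0 < c i) ∧ IsTightOn (fun k => c k • Φ k) I

/-- The rank-one outer product `φφᵀ` as an `N×N` matrix. -/
def outer {N : ℕ} (φ : Fin N → ℝ) : Matrix (Fin N) (Fin N) ℝ := Matrix.vecMulVec φ φ

/-- `d = (N-1)(N+2)/2`. -/
def Fdim (N : ℕ) : ℕ := (N - 1) * (N + 2) / 2

/-- The map `F : ℝ^N → ℝ^d` obtained by stacking the blocks
`F_0(x) = (x_1²-x_2², …, x_1²-x_N²)` and `F_k(x) = (x_k x_{k+1}, …, x_k x_N)`, `k = 1,…,N-1`;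
in `1`-based indexing the entry `x_k x_ℓ` sits at position `k(2N-1-k)/2 + ℓ - 1`. -/
def Fmap {N : ℕ} (x : Fin N → ℝ) : Fin (Fdim N) → ℝ := fun j =>
  (if h : j.val + 1 < N then x ⟨0, by omega⟩ ^ 2 - x ⟨j.val + 1, h⟩ ^ 2 else 0) +
  ∑ a : Fin N, ∑ b : Fin N,
    if a.val < b.val ∧ j.val + 1 = (a.val + 1) * (2 * N - 2 - a.val) / 2 + b.val
    then x a * x b else 0

open Classical in
/-- `‖u‖₀`, the number of nonzero entries of `u`. -/
noncomputable def zeroNorm {n : ℕ} (u : Fin n → ℝ) : ℕ :=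
  (Finset.univ.filter fun i => u i ≠ 0).card

open Matrix

lemma dot_eq {n : ℕ} (x y : Fin n → ℝ) : dot x y = x ⬝ᵥ y := rfl

lemma dot_comm {n : ℕ} (x y : Fin n → ℝ) : dot x y = dot y x := by
  simp [dot, mul_comm]

lemma dot_self_nonneg {n : ℕ} (x : Fin n → ℝ) : 0 ≤ dot x x :=
  Finset.sum_nonneg fun i _ => mul_self_nonneg _

lemma dot_self_pos {n : ℕ} {x : Fin n → ℝ} (hx : x ≠ 0) : 0 < dot x x := by
  obtain ⟨i, hi⟩ := Function.ne_iff.1 hx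
  exact Finset.sum_pos' (fun j _ => mul_self_nonneg _)
    ⟨i, Finset.mem_univ i, mul_self_pos.2 hi⟩

lemma dot_smul_right {n : ℕ} (c : ℝ) (x y : Fin n → ℝ) : dot x (c • y) = c * dot x y := by
  simp [dot, Finset.mul_sum, mul_comm, mul_left_comm]

lemma dot_smul_left {n : ℕ} (c : ℝ) (x y : Fin n → ℝ) : dot (c • x) y = c * dot x y := by
  simp [dot, Finset.mul_sum, mul_comm, mul_left_comm]

lemma quad {N : ℕ} (Ψ : Matrix (Fin N) (Fin N) ℝ) (x : Fin N → ℝ) :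
    ∑ k, dot x (Ψ k) ^ 2 = x ⬝ᵥ (Ψᵀ * Ψ).mulVec x := by
  have h1 : ∀ k, dot x (Ψ k) = Ψ.mulVec x k := by
    intro k; simp [dot, Matrix.mulVec, dotProduct, mul_comm]
  calc ∑ k, dot x (Ψ k) ^ 2 = (Ψ.mulVec x) ⬝ᵥ (Ψ.mulVec x) := by
        simp [dotProduct, h1, sq]
    _ = x ⬝ᵥ (Ψᵀ * Ψ).mulVec x := by
        rw [Matrix.dotProduct_mulVec, ← Matrix.mulVec_transpose, Matrix.mulVec_mulVec,
          dotProduct_comm]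

lemma polar {N : ℕ} {A : ℝ} (M : Matrix (Fin N) (Fin N) ℝ) (hsym : Mᵀ = M)
    (h : ∀ x, x ⬝ᵥ M.mulVec x = A * (x ⬝ᵥ x)) : M = A • (1 : Matrix (Fin N) (Fin N) ℝ) := by
  have diag : ∀ i, M i i = A := by
    intro i
    have := h (Pi.single i 1)
    simpa [dotProduct, Matrix.mulVec, Pi.single_apply, Finset.mul_sum] using this
  ext i j
  by_cases hij : i = j
  · subst hij; simp [diag, Matrix.one_apply]
  · have h2 := h (Pi.single i 1 + Pi.single j 1)
    have hMji : M j i = M i j := by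
      conv_lhs => rw [← hsym]
      rfl
    simp [dotProduct, Matrix.mulVec, Pi.single_apply, Finset.mul_sum, mul_add, add_mul,
      Finset.sum_add_distrib, hij, Ne.symm hij] at h2
    simp [Matrix.one_apply, hij, Matrix.smul_apply]
    have d1 := diag i; have d2 := diag j
    linarith

lemma gram {N : ℕ} (Ψ : Matrix (Fin N) (Fin N) ℝ) (i j : Fin N) :
    (Ψ * Ψᵀ) i j = dot (Ψ i) (Ψ j) := by
  simp [Matrix.mul_apply, dot, Matrix.transpose_apply]


lemma sum_over_finset {M : ℕ} {n : ℕ} (I : Finset (Fin M)) (hcard : I.card = n)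
    (f : Fin M → ℝ) :
    ∑ k ∈ I, f k = ∑ j : Fin n, f ((I.equivFinOfCardEq hcard).symm j) := by
  rw [← Finset.sum_coe_sort I f, ← Equiv.sum_comp (I.equivFinOfCardEq hcard).symm
    (fun a : I => f a)]

theorem statement1' {M N : ℕ} (hMN : N ≤ M) (Φ : Fin M → Fin N → ℝ) :
    (∃ I : Finset (Fin M), I.card = N ∧
    ∃ c : Fin M → ℝ, (∀ i ∈ I, 0 ≤ c i) ∧
    ∃ A : ℝ, 0 < A ∧ ∀ x : Fin N → ℝ, ∑ k ∈ I, dot x (c k • Φ k) ^ 2 = A * dot x x) ↔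
      ∃ I : Finset (Fin M), I.card = N ∧ (∀ i ∈ I, Φ i ≠ 0) ∧
        ∀ i ∈ I, ∀ j ∈ I, i ≠ j → dot (Φ i) (Φ j) = 0 := by
  constructor
  · rintro ⟨I, hcard, c, hc, A, hA, htight⟩
    set e := I.equivFinOfCardEq hcard with he
    set Ψ : Matrix (Fin N) (Fin N) ℝ := (fun j _i => c (e.symm j) * Φ (e.symm j) _i : Matrix (Fin N) (Fin N) ℝ) with hΨ
    have hquad : ∀ x, ∑ j, dot x (Ψ j) ^ 2 = A * dot x x := by
      intro x
      rw [← htight x, sum_over_finset I hcard (fun k => dot x (c k • Φ k) ^ 2)]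
      rfl
    have hpolar : Ψᵀ * Ψ = A • (1 : Matrix (Fin N) (Fin N) ℝ) := by
      apply polar
      · rw [Matrix.transpose_mul, Matrix.transpose_transpose]
      · intro x
        rw [← quad, hquad, dot_eq]
    have hinv : ((A⁻¹) • Ψᵀ) * Ψ = 1 := by
      rw [Matrix.smul_mul, hpolar, smul_smul, inv_mul_cancel₀ hA.ne', one_smul]
    have hG : Ψ * Ψᵀ = A • 1 := by
      have h2 : Ψ * ((A⁻¹) • Ψᵀ) = 1 := mul_eq_one_comm.1 hinv
      rw [Matrix.mul_smul] at h2
      calc Ψ * Ψᵀ = A • (A⁻¹ • (Ψ * Ψᵀ)) := by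
            rw [smul_smul, mul_inv_cancel₀ hA.ne', one_smul]
        _ = A • 1 := by rw [h2]
    have hgram : ∀ i : I, ∀ j : I,
        c i * c j * dot (Φ i) (Φ j) = A * (if (i : Fin M) = j then 1 else 0) := by
      intro i j
      have := congrFun (congrFun hG (e i)) (e j)
      rw [gram] at this
      simp only [hΨ, Equiv.symm_apply_apply] at this
      rw [show (fun _i => c (i:Fin M) * Φ (i:Fin M) _i) = c (i:Fin M) • Φ (i:Fin M) from rfl,
        show (fun _i => c (j:Fin M) * Φ (j:Fin M) _i) = c (j:Fin M) • Φ (j:Fin M) from rfl,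
        dot_smul_left, dot_smul_right, ← mul_assoc] at this
      rw [this]
      simp only [Matrix.smul_apply, Matrix.one_apply, smul_eq_mul]
      congr 1
      by_cases h : (i : Fin M) = j
      · have : i = j := Subtype.ext h
        simp [this, h]
      · have : e i ≠ e j := fun hh => h (congrArg Subtype.val (e.injective hh))
        simp [h, this]
    have hself : ∀ i : I, c i * c i * dot (Φ i) (Φ i) = A := by
      intro i; simpa using hgram i i
    have hcne : ∀ i : I, c (i : Fin M) ≠ 0 := by
      intro i hzero
      have := hself i
      rw [hzero] at this
      simp at this
      exact hA.ne' this.symm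
    refine ⟨I, hcard, ?_, ?_⟩
    · intro i hi hzero
      have := hself ⟨i, hi⟩
      rw [hzero] at this
      simp [dot] at this
      exact hA.ne' this.symm
    · intro i hi j hj hij
      have := hgram ⟨i, hi⟩ ⟨j, hj⟩
      simp only [hij, if_false, mul_zero] at this
      rcases mul_eq_zero.1 this with h | h
      · rcases mul_eq_zero.1 h with h' | h'
        · exact absurd h' (hcne ⟨i, hi⟩)
        · exact absurd h' (hcne ⟨j, hj⟩)
      · exact h
  · rintro ⟨I, hcard, hnz, horth⟩
    set e := I.equivFinOfCardEq hcard with he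
    refine ⟨I, hcard, fun i => (Real.sqrt (dot (Φ i) (Φ i)))⁻¹,
      fun i _ => inv_nonneg.2 (Real.sqrt_nonneg _), 1, one_pos, ?_⟩
    set c : Fin M → ℝ := fun i => (Real.sqrt (dot (Φ i) (Φ i)))⁻¹ with hcdef
    set Ψ : Matrix (Fin N) (Fin N) ℝ := (fun j _i => c (e.symm j) * Φ (e.symm j) _i : Matrix (Fin N) (Fin N) ℝ) with hΨ
    have hG : Ψ * Ψᵀ = 1 := by
      ext j j'
      rw [gram]
      show dot (c (e.symm j) • Φ (e.symm j)) (c (e.symm j') • Φ (e.symm j')) = (1 : Matrix (Fin N) (Fin N) ℝ) j j'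
      rw [dot_smul_left, dot_smul_right, ← mul_assoc]
      by_cases h : j = j'
      · subst h
        have hd : 0 < dot (Φ (e.symm j)) (Φ (e.symm j)) :=
          dot_self_pos (hnz _ (e.symm j).2)
        have hs : Real.sqrt (dot (Φ (e.symm j)) (Φ (e.symm j))) *
            Real.sqrt (dot (Φ (e.symm j)) (Φ (e.symm j))) = dot (Φ (e.symm j)) (Φ (e.symm j)) :=
          Real.mul_self_sqrt hd.le
        simp only [hcdef, Matrix.one_apply_eq]
        rw [← mul_inv, hs]
        exact inv_mul_cancel₀ hd.ne'
      · have hne : ((e.symm j : Fin M)) ≠ (e.symm j' : Fin M) := by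
          intro hh
          exact h (by simpa using e.symm.injective (Subtype.ext hh))
        rw [horth _ (e.symm j).2 _ (e.symm j').2 hne, mul_zero, Matrix.one_apply_ne h]
    have hG2 : Ψᵀ * Ψ = 1 := mul_eq_one_comm.1 hG
    intro x
    rw [sum_over_finset I hcard (fun k => dot x (c k • Φ k) ^ 2), ← he]
    show ∑ j : Fin N, dot x (Ψ j) ^ 2 = 1 * dot x x
    rw [quad Ψ x, hG2, Matrix.one_mulVec, one_mul, dot_eq]


/-- For `M ≥ N`, a frame `Φ = {φ_k}_{k=1}^M` for `ℝ^N` is `N`-scalable if and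
only if `Φ` contains an orthogonal basis of `ℝ^N`, i.e. there is a subset of `N` frame vectors
which are nonzero and pairwise orthogonal. -/
theorem statement1 {M N : ℕ} (hMN : N ≤ M) (Φ : Fin M → Fin N → ℝ) (hframe : IsFrame Φ) :
    IsMScalable Φ N ↔
      ∃ I : Finset (Fin M), I.card = N ∧ (∀ i ∈ I, Φ i ≠ 0) ∧
        ∀ i ∈ I, ∀ j ∈ I, i ≠ j → dot (Φ i) (Φ j) = 0 := by
  exact statement1' hMN Φ

end ScalableFrames
end

section
/- For M ≥ N(N+1)/2, every scalable frame Φ = {φ_k}_{k=1}^{M} for ℝ^N is N(N+1)/2-scalable; that is, the set of scalable frames in F(M,N) equals the set of N(N+1)/2-scalable frames in F(M,N). -/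
open scoped BigOperators

namespace ScalableFrames

lemma dot_smul {n : ℕ} (x y : Fin n → ℝ) (c : ℝ) : dot x (c • y) = c * dot x y := by
  simp only [dot, Pi.smul_apply, smul_eq_mul, Finset.mul_sum]
  exact Finset.sum_congr rfl fun i _ => by ring

lemma dot_single {n : ℕ} (a : Fin n) (y : Fin n → ℝ) : dot (Pi.single a 1) y = y a := by
  simp [dot, Pi.single_apply]

lemma dot_add_left {n : ℕ} (x y z : Fin n → ℝ) : dot (x + y) z = dot x z + dot y z := by
  simp [dot, add_mul, Finset.sum_add_distrib]

-- conic Caratheodory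
lemma caratheodory {ι V : Type*} [Fintype ι] [AddCommGroup V] [Module ℝ V]
    [FiniteDimensional ℝ V] (v : ι → V) (u : V) :
    ∀ S : Finset ι, ∀ d : ι → ℝ, (∀ i ∈ S, 0 ≤ d i) → ∑ i ∈ S, d i • v i = u →
    ∃ T : Finset ι, T ⊆ S ∧ T.card ≤ Module.finrank ℝ V ∧
      ∃ d' : ι → ℝ, (∀ i ∈ T, 0 ≤ d' i) ∧ ∑ i ∈ T, d' i • v i = u := by
  intro S
  induction S using Finset.strongInduction with
  | _ S ih =>
    intro d hd hsum
    by_cases hcard : S.card ≤ Module.finrank ℝ V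
    · exact ⟨S, subset_rfl, hcard, d, hd, hsum⟩
    · push_neg at hcard
      have hdep : ¬ LinearIndependent ℝ (fun i : S => v i) := by
        intro hli
        have := hli.fintype_card_le_finrank
        simp only [Fintype.card_coe] at this
        omega
      rw [Fintype.not_linearIndependent_iff] at hdep
      obtain ⟨g, hg0, i₁, hg1⟩ := hdep
      -- extend g, adjusting sign
      classical
      set ε : ℝ := if 0 < g i₁ then 1 else -1 with hε
      have hεsum : ∀ g' : ι → ℝ, (∀ i, g' i = if h : i ∈ S then ε * g ⟨i, h⟩ else 0) →
        True := fun _ _ => trivial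
      set lam : ι → ℝ := fun i => if h : i ∈ S then ε * g ⟨i, h⟩ else 0 with hlam
      have hlamsum : ∑ i ∈ S, lam i • v i = 0 := by
        have : ∑ i ∈ S, lam i • v i = ε • ∑ i : S, g i • v i := by
          rw [Finset.smul_sum, ← Finset.sum_attach S (fun i => lam i • v i)]
          refine Finset.sum_congr rfl fun i _ => ?_
          simp [hlam, i.2, mul_smul]
        rw [this, hg0, smul_zero]
      have hi₁pos : 0 < lam (i₁ : ι) := by
        simp only [hlam, i₁.2, dif_pos]
        rcases lt_or_ge 0 (g i₁) with h | h
        · simpa [hε, h] using h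
        · have hlt : g i₁ < 0 := lt_of_le_of_ne h hg1
          have : ¬ (0 < g i₁) := not_lt.2 h
          simp only [hε, this, if_false]
          nlinarith
      set P : Finset ι := S.filter (fun i => 0 < lam i) with hP
      have hPne : P.Nonempty := ⟨i₁, Finset.mem_filter.2 ⟨i₁.2, hi₁pos⟩⟩
      obtain ⟨i₀, hi₀P, hi₀min⟩ := Finset.exists_min_image P (fun i => d i / lam i) hPne
      have hi₀S : (i₀ : ι) ∈ S := (Finset.mem_filter.1 hi₀P).1
      have hi₀lam : 0 < lam i₀ := (Finset.mem_filter.1 hi₀P).2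
      set t : ℝ := d i₀ / lam i₀ with ht
      have ht0 : 0 ≤ t := div_nonneg (hd _ hi₀S) hi₀lam.le
      set d'' : ι → ℝ := fun i => d i - t * lam i with hd''
      have hd''nn : ∀ i ∈ S, 0 ≤ d'' i := by
        intro i hi
        rcases le_or_gt (lam i) 0 with h | h
        · have : t * lam i ≤ 0 := mul_nonpos_of_nonneg_of_nonpos ht0 h
          have := hd i hi
          simp only [hd'']; linarith
        · have hiP : i ∈ P := Finset.mem_filter.2 ⟨hi, h⟩
          have := hi₀min i hiP
          have : t ≤ d i / lam i := this
          have := (div_le_div_iff₀ hi₀lam h).1 ‹d i₀ / lam i₀ ≤ d i / lam i›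
          simp only [hd'']
          have h2 : t * lam i ≤ d i := by
            rw [ht, div_mul_eq_mul_div, div_le_iff₀ hi₀lam]; nlinarith
          linarith
      have hd''i₀ : d'' i₀ = 0 := by
        simp only [hd'', ht]
        field_simp
        ring
      have hsum'' : ∑ i ∈ S, d'' i • v i = u := by
        have : ∑ i ∈ S, d'' i • v i = (∑ i ∈ S, d i • v i) - t • ∑ i ∈ S, lam i • v i := by
          rw [Finset.smul_sum, ← Finset.sum_sub_distrib]
          refine Finset.sum_congr rfl fun i _ => ?_
          simp [hd'', sub_smul, mul_smul]
        rw [this, hsum, hlamsum, smul_zero, sub_zero]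
      have herase : ∑ i ∈ S.erase i₀, d'' i • v i = u := by
        rw [← Finset.add_sum_erase S (fun i => d'' i • v i) hi₀S] at hsum''
        simpa [hd''i₀] using hsum''
      obtain ⟨T, hT1, hT2, hT3⟩ := ih (S.erase i₀) (Finset.erase_ssubset hi₀S)
        d'' (fun i hi => hd''nn i (Finset.mem_of_mem_erase hi)) herase
      exact ⟨T, hT1.trans (Finset.erase_subset _ _), hT2, hT3⟩

def symOuter {N : ℕ} (φ : Fin N → ℝ) : Sym2 (Fin N) → ℝ :=
  Sym2.lift ⟨fun a b => φ a * φ b, fun a b => mul_comm _ _⟩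

def diagVec (N : ℕ) (A : ℝ) : Sym2 (Fin N) → ℝ :=
  Sym2.lift ⟨fun a b => if a = b then A else 0, fun a b => by
    show (if a = b then A else 0) = if b = a then A else 0
    by_cases h : a = b
    · rw [if_pos h, if_pos h.symm]
    · rw [if_neg h, if_neg (fun hb => h hb.symm)]⟩

/-- quadratic identity from matrix identity -/
lemma quad_of_sym {M N : ℕ} (Φ : Fin M → Fin N → ℝ) (S : Finset (Fin M)) (d : Fin M → ℝ)
    (A : ℝ) (h : ∀ a b : Fin N, ∑ k ∈ S, d k * (Φ k a * Φ k b) = if a = b then A else 0) :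
    ∀ x : Fin N → ℝ, ∑ k ∈ S, d k * dot x (Φ k) ^ 2 = A * dot x x := by
  intro x
  have key : ∀ k, dot x (Φ k) ^ 2 = ∑ a : Fin N, ∑ b : Fin N, (x a * x b) * (Φ k a * Φ k b) := by
    intro k
    rw [sq, dot, Finset.sum_mul_sum]
    exact Finset.sum_congr rfl fun a _ => Finset.sum_congr rfl fun b _ => by ring
  calc ∑ k ∈ S, d k * dot x (Φ k) ^ 2
      = ∑ k ∈ S, ∑ a : Fin N, ∑ b : Fin N, (x a * x b) * (d k * (Φ k a * Φ k b)) := by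
        refine Finset.sum_congr rfl fun k _ => ?_
        rw [key k, Finset.mul_sum]
        refine Finset.sum_congr rfl fun a _ => ?_
        rw [Finset.mul_sum]
        exact Finset.sum_congr rfl fun b _ => by ring
    _ = ∑ a : Fin N, ∑ b : Fin N, (x a * x b) * ∑ k ∈ S, d k * (Φ k a * Φ k b) := by
        rw [Finset.sum_comm]
        refine Finset.sum_congr rfl fun a _ => ?_
        rw [Finset.sum_comm]
        refine Finset.sum_congr rfl fun b _ => ?_
        rw [Finset.mul_sum]
    _ = ∑ a : Fin N, ∑ b : Fin N, (x a * x b) * (if a = b then A else 0) := by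
        refine Finset.sum_congr rfl fun a _ => Finset.sum_congr rfl fun b _ => by rw [h a b]
    _ = A * dot x x := by
        rw [dot, Finset.mul_sum]
        refine Finset.sum_congr rfl fun a _ => ?_
        simp only [mul_ite, mul_zero]
        rw [Finset.sum_ite_eq]
        simp only [Finset.mem_univ, if_true]
        ring

/-- matrix identity from quadratic identity (polarization) -/
lemma sym_of_quad {M N : ℕ} (Φ : Fin M → Fin N → ℝ) (S : Finset (Fin M)) (d : Fin M → ℝ)
    (A : ℝ) (h : ∀ x : Fin N → ℝ, ∑ k ∈ S, d k * dot x (Φ k) ^ 2 = A * dot x x) :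
    ∀ a b : Fin N, ∑ k ∈ S, d k * (Φ k a * Φ k b) = if a = b then A else 0 := by
  have hdiag : ∀ a : Fin N, ∑ k ∈ S, d k * (Φ k a * Φ k a) = A := by
    intro a
    have := h (Pi.single a 1)
    simp only [dot_single, Pi.single_eq_same, mul_one] at this
    calc ∑ k ∈ S, d k * (Φ k a * Φ k a) = ∑ k ∈ S, d k * Φ k a ^ 2 := by
          exact Finset.sum_congr rfl fun k _ => by ring
      _ = A := this
  intro a b
  by_cases hab : a = b
  · rw [if_pos hab, ← hab]; exact hdiag a
  · rw [if_neg hab]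
    set x : Fin N → ℝ := Pi.single a (1:ℝ) + Pi.single b 1 with hx
    have := h x
    have hda : ∀ y : Fin N → ℝ, dot x y = y a + y b := by
      intro y; rw [hx, dot_add_left, dot_single, dot_single]
    simp only [hda] at this
    have hxx : x a + x b = 2 := by
      simp [hx, Pi.single_apply, hab, Ne.symm hab]
      norm_num
    rw [hxx] at this
    have e1 : ∑ k ∈ S, d k * (Φ k a + Φ k b) ^ 2
        = ∑ k ∈ S, (d k * (Φ k a * Φ k a) + d k * (Φ k b * Φ k b) + 2 * (d k * (Φ k a * Φ k b))) := by
      exact Finset.sum_congr rfl fun k _ => by ring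
    rw [e1, Finset.sum_add_distrib, Finset.sum_add_distrib, hdiag a, hdiag b,
      ← Finset.mul_sum] at this
    linarith

lemma card_sym2 (N : ℕ) : Fintype.card (Sym2 (Fin N)) = N * (N + 1) / 2 := by
  rw [Sym2.card]
  simp [Nat.choose_two_right, Nat.mul_comm]


lemma symOuter_mk {N : ℕ} (φ : Fin N → ℝ) (a b : Fin N) : symOuter φ s(a, b) = φ a * φ b := rfl

lemma diagVec_mk {N : ℕ} (A : ℝ) (a b : Fin N) :
    diagVec N A s(a, b) = if a = b then A else 0 := rfl

theorem statement6' {M N : ℕ} (h : N * (N + 1) / 2 ≤ M)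
    (Φ : Fin M → Fin N → ℝ) :
    (∃ c : Fin M → ℝ, (∀ k, 0 ≤ c k) ∧
      ∃ A : ℝ, 0 < A ∧ ∀ x : Fin N → ℝ, ∑ k, dot x (c k • Φ k) ^ 2 = A * dot x x) ↔
    (∃ I : Finset (Fin M), I.card = N * (N + 1) / 2 ∧
      ∃ c : Fin M → ℝ, (∀ i ∈ I, 0 ≤ c i) ∧
        ∃ A : ℝ, 0 < A ∧ ∀ x : Fin N → ℝ, ∑ k ∈ I, dot x (c k • Φ k) ^ 2 = A * dot x x) := by
  classical
  constructor
  · rintro ⟨c, hc, A, hA, htight⟩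
    set d : Fin M → ℝ := fun k => c k ^ 2 with hd
    have hquad : ∀ x : Fin N → ℝ, ∑ k ∈ Finset.univ, d k * dot x (Φ k) ^ 2 = A * dot x x := by
      intro x
      rw [← htight x]
      refine Finset.sum_congr rfl fun k _ => ?_
      rw [dot_smul]; ring
    have hsym := sym_of_quad Φ Finset.univ d A hquad
    have hvec : ∑ k ∈ Finset.univ, d k • symOuter (Φ k) = diagVec N A := by
      funext s
      induction s using Sym2.ind with
      | _ a b =>
        rw [Finset.sum_apply, diagVec_mk, ← hsym a b]
        exact Finset.sum_congr rfl fun k _ => by rw [Pi.smul_apply, symOuter_mk, smul_eq_mul]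
    obtain ⟨T, hTuniv, hTcard, d', hd'nn, hd'sum⟩ :=
      caratheodory (fun k => symOuter (Φ k)) (diagVec N A) Finset.univ d
        (fun i _ => sq_nonneg (c i)) hvec
    have hrank : Module.finrank ℝ (Sym2 (Fin N) → ℝ) = N * (N + 1) / 2 := by
      rw [Module.finrank_pi, card_sym2]
    rw [hrank] at hTcard
    obtain ⟨T', hTT', _, hT'card⟩ := Finset.exists_subsuperset_card_eq hTuniv hTcard
      (by simpa using h)
    have hsym' : ∀ a b : Fin N, ∑ k ∈ T, d' k * (Φ k a * Φ k b) = if a = b then A else 0 := by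
      intro a b
      have := congrFun hd'sum s(a, b)
      rw [Finset.sum_apply, diagVec_mk] at this
      rw [← this]
      exact Finset.sum_congr rfl fun k _ => by rw [Pi.smul_apply, symOuter_mk, smul_eq_mul]
    have hquad' := quad_of_sym Φ T d' A hsym'
    refine ⟨T', hT'card, fun k => if k ∈ T then Real.sqrt (d' k) else 0, ?_, A, hA, ?_⟩
    · intro i _
      by_cases hi : i ∈ T <;> simp [hi, Real.sqrt_nonneg]
    · intro x
      rw [← Finset.sum_subset hTT' (fun k _ hk => by simp [dot, hk])]
      rw [← hquad' x]
      refine Finset.sum_congr rfl fun k hk => ?_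
      have e : (fun k => if k ∈ T then Real.sqrt (d' k) else 0) k = Real.sqrt (d' k) :=
        if_pos hk
      rw [e, dot_smul, mul_pow, Real.sq_sqrt (hd'nn k hk)]
  · rintro ⟨I, hIcard, c, hc, A, hA, htight⟩
    refine ⟨fun k => if k ∈ I then c k else 0, ?_, A, hA, ?_⟩
    · intro k
      by_cases hk : k ∈ I <;> simp [hk, hc k]
    · intro x
      rw [← htight x, ← Finset.sum_subset (Finset.subset_univ I) (fun k _ hk => by
        simp [dot, hk])]
      refine Finset.sum_congr rfl fun k hk => ?_
      have e : (fun k => if k ∈ I then c k else 0) k = c k := if_pos hk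
      rw [e]

/-- For `M ≥ N(N+1)/2`, a frame `Φ` for `ℝ^N` is scalable if and only if it is
`N(N+1)/2`-scalable; i.e. `SC(M,N) = SC(M, N, N(N+1)/2)`. -/
theorem statement6 {M N : ℕ} (h : N * (N + 1) / 2 ≤ M)
    (Φ : Fin M → Fin N → ℝ) (hframe : IsFrame Φ) :
    IsScalable Φ ↔ IsMScalable Φ (N * (N + 1) / 2) := by
  simpa only [IsScalable, IsTight, IsMScalable, IsTightOn] using statement6' h Φ

end ScalableFrames
end

section
/- Let M ≥ N ≥ 2 and N ≤ m ≤ M. If a frame Φ = {φ_k}_{k=1}^M for ℝ^N is strictly m-scalable, then there exists a subset I ⊆ {1,...,M} with #I = m such that ∩_{i∈I} H⁻(F(φ_i)) = ∅, where H⁻(v) := {y ∈ ℝ^d : ⟨v, y⟩ < 0}. -/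
open scoped BigOperators

namespace ScalableFrames

/-- The open half space `H⁻(v) = {y : ⟨v, y⟩ < 0}`. -/
def Hminus {d : ℕ} (v : Fin d → ℝ) : Set (Fin d → ℝ) := {y | dot v y < 0}

/-- Let `M ≥ N ≥ 2` and `N ≤ m ≤ M`. If a frame `Φ` for `ℝ^N` is strictly
`m`-scalable, then there is `I ⊆ [M]` with `#I = m` such that `⋂_{i ∈ I} H⁻(F(φ_i)) = ∅`. -/
theorem statement10 {M N m : ℕ} (hN : 2 ≤ N) (hNm : N ≤ m) (hmM : m ≤ M)
    (Φ : Fin M → Fin N → ℝ) (hframe : IsFrame Φ)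
    (hsc : IsStrictlyMScalable Φ m) :
    ∃ I : Finset (Fin M), I.card = m ∧ (⋂ i ∈ I, Hminus (Fmap (Φ i))) = ∅ := by
  obtain ⟨I, hIcard, c, hc, A, hA, htight⟩ := hsc
  refine ⟨I, hIcard, ?_⟩
  have hI : I.Nonempty := Finset.card_pos.mp (by omega)
  rw [Set.eq_empty_iff_forall_notMem]
  intro y hy
  simp only [Set.mem_iInter, Hminus, Set.mem_setOf_eq] at hy
  -- rewrite tightness using dot linearity in the scalar
  have ht : ∀ x : Fin N → ℝ, ∑ k ∈ I, (c k) ^ 2 * dot x (Φ k) ^ 2 = A * dot x x := by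
    intro x
    have h := htight x
    calc ∑ k ∈ I, (c k) ^ 2 * dot x (Φ k) ^ 2
        = ∑ k ∈ I, dot x ((fun k => c k • Φ k) k) ^ 2 := by
          refine Finset.sum_congr rfl fun k _ => ?_
          have hdk : dot x (c k • Φ k) = c k * dot x (Φ k) := by
            simp only [dot, Pi.smul_apply, smul_eq_mul, Finset.mul_sum]
            exact Finset.sum_congr rfl fun i _ => by ring
          simp only [hdk]; ring
      _ = A * dot x x := h
  have hdot_single : ∀ (a : Fin N) (v : Fin N → ℝ), dot (Pi.single a 1) v = v a := by
    intro a v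
    simp [dot, Pi.single_apply, ite_mul]
  -- diagonal entries
  have hSdiag : ∀ a : Fin N, ∑ k ∈ I, (c k) ^ 2 * (Φ k a) ^ 2 = A := by
    intro a
    have h := ht (Pi.single a 1)
    simp only [hdot_single] at h
    simpa using h
  -- off-diagonal entries
  have hSoff : ∀ a b : Fin N, a ≠ b → ∑ k ∈ I, (c k) ^ 2 * (Φ k a * Φ k b) = 0 := by
    intro a b hab
    have h3 := ht (Pi.single a 1 + Pi.single b 1)
    have hdadd : ∀ v : Fin N → ℝ, dot (Pi.single a 1 + Pi.single b 1) v = v a + v b := by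
      intro v
      simp only [dot, Pi.add_apply, add_mul, Finset.sum_add_distrib]
      rw [← dot, ← dot, hdot_single, hdot_single]
    simp only [hdadd] at h3
    have hba : b ≠ a := hab.symm
    have hxx : ((Pi.single a 1 + Pi.single b 1 : Fin N → ℝ)) a + ((Pi.single a 1 + Pi.single b 1 : Fin N → ℝ)) b = 2 := by
      simp [Pi.add_apply, Pi.single_apply, hab, hba]
      norm_num
    rw [hxx] at h3
    have hexp : ∑ k ∈ I, (c k) ^ 2 * (Φ k a + Φ k b) ^ 2
        = ∑ k ∈ I, (c k) ^ 2 * (Φ k a) ^ 2 + 2 * ∑ k ∈ I, (c k) ^ 2 * (Φ k a * Φ k b)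
          + ∑ k ∈ I, (c k) ^ 2 * (Φ k b) ^ 2 := by
      rw [Finset.mul_sum, ← Finset.sum_add_distrib, ← Finset.sum_add_distrib]
      exact Finset.sum_congr rfl fun k _ => by ring
    rw [hexp, hSdiag a, hSdiag b] at h3
    linarith
  -- key: for each coordinate j, the weighted sum of Fmap values vanishes
  have hkey : ∀ j : Fin (Fdim N), ∑ k ∈ I, (c k) ^ 2 * Fmap (Φ k) j = 0 := by
    intro j
    simp only [Fmap, mul_add, Finset.sum_add_distrib]
    have hpart1 : ∑ k ∈ I, (c k) ^ 2 *
        (if h : j.val + 1 < N then Φ k ⟨0, by omega⟩ ^ 2 - Φ k ⟨j.val + 1, h⟩ ^ 2 else 0) = 0 := by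
      by_cases h : j.val + 1 < N
      · simp only [dif_pos h, mul_sub, Finset.sum_sub_distrib]
        rw [hSdiag ⟨0, by omega⟩, hSdiag ⟨j.val + 1, h⟩]
        ring
      · simp [dif_neg h]
    have hpart2 : ∑ k ∈ I, (c k) ^ 2 * (∑ a : Fin N, ∑ b : Fin N,
        if a.val < b.val ∧ j.val + 1 = (a.val + 1) * (2 * N - 2 - a.val) / 2 + b.val
        then Φ k a * Φ k b else 0) = 0 := by
      simp only [Finset.mul_sum]
      rw [Finset.sum_comm]
      refine Finset.sum_eq_zero fun a _ => ?_
      rw [Finset.sum_comm]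
      refine Finset.sum_eq_zero fun b _ => ?_
      by_cases h : a.val < b.val ∧ j.val + 1 = (a.val + 1) * (2 * N - 2 - a.val) / 2 + b.val
      · simp only [if_pos h]
        exact hSoff a b (Fin.ne_of_val_ne (Nat.ne_of_lt h.1))
      · simp only [if_neg h, mul_zero, Finset.sum_const_zero]
    rw [hpart1, hpart2]
    ring
  -- now derive the contradiction
  have hT0 : ∑ k ∈ I, (c k) ^ 2 * dot (Fmap (Φ k)) y = 0 := by
    have hswap : ∑ k ∈ I, (c k) ^ 2 * dot (Fmap (Φ k)) y
        = ∑ j, (∑ k ∈ I, (c k) ^ 2 * Fmap (Φ k) j) * y j := by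
      simp only [dot, Finset.mul_sum, Finset.sum_mul]
      rw [Finset.sum_comm]
      exact Finset.sum_congr rfl fun j _ => Finset.sum_congr rfl fun k _ => by ring
    rw [hswap]
    refine Finset.sum_eq_zero fun j _ => ?_
    rw [hkey j, zero_mul]
  have hTneg : ∑ k ∈ I, (c k) ^ 2 * dot (Fmap (Φ k)) y < 0 := by
    refine Finset.sum_neg (fun k hk => ?_) hI
    exact mul_neg_of_pos_of_neg (pow_pos (hc k hk) 2) (hy k hk)
  linarith

end ScalableFrames
end

section
/- Let Φ = {φ_k}_{k=1}^M be a frame for ℝ^N, N ≥ 2. If there exists an orthogonal transformation T of ℝ^N such that T(φ_k) ∈ ℝ^{N−2} × (0,∞)² for every k (i.e., the last two coordinates of each T(φ_k) are strictly positive), then Φ is not scalable. In particular, Φ is not scalable if there exist indices i ≠ j in {1,...,N} such that φ_k(i)·φ_k(j) > 0 for all k ∈ {1,...,M}. -/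
open scoped BigOperators

namespace ScalableFrames

/-- The vector with value `a` at `i`, `b` at `j`, `0` elsewhere. -/
def twoVec {N : ℕ} (i j : Fin N) (a b : ℝ) : Fin N → ℝ :=
  fun t => (if t = i then a else 0) + (if t = j then b else 0)

lemma dot_twoVec {N : ℕ} (i j : Fin N) (a b : ℝ) (v : Fin N → ℝ) :
    dot (twoVec i j a b) v = a * v i + b * v j := by
  unfold dot twoVec
  simp only [add_mul, Finset.sum_add_distrib, ite_mul, zero_mul,
    Finset.sum_ite_eq', Finset.mem_univ, if_true]

lemma key {M N : ℕ} (ψ : Fin M → Fin N → ℝ) (c : Fin M → ℝ) (A : ℝ) (hA : 0 < A)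
    (ht : ∀ x : Fin N → ℝ, ∑ k, (c k * dot x (ψ k)) ^ 2 = A * dot x x)
    (i j : Fin N) (hij : i ≠ j) (hpos : ∀ k, 0 < ψ k i * ψ k j) : False := by
  have hp := ht (twoVec i j 1 1)
  have hm := ht (twoVec i j 1 (-1))
  simp only [dot_twoVec] at hp hm
  have hvi : twoVec i j (1:ℝ) 1 i = 1 := by simp [twoVec, hij, Ne.symm hij]
  have hvj : twoVec i j (1:ℝ) 1 j = 1 := by simp [twoVec, hij, Ne.symm hij]
  have hwi : twoVec i j (1:ℝ) (-1) i = 1 := by simp [twoVec, hij, Ne.symm hij]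
  have hwj : twoVec i j (1:ℝ) (-1) j = -1 := by simp [twoVec, hij, Ne.symm hij]
  rw [hvi, hvj] at hp
  rw [hwi, hwj] at hm
  have hsum : ∑ k, (4 * (c k ^ 2 * (ψ k i * ψ k j))) = 0 := by
    have h : (∑ k, (c k * (1 * ψ k i + 1 * ψ k j)) ^ 2) -
        ∑ k, (c k * (1 * ψ k i + -1 * ψ k j)) ^ 2 = 0 := by rw [hp, hm]; ring
    rw [← Finset.sum_sub_distrib] at h
    rw [← h]
    exact Finset.sum_congr rfl (fun k _ => by ring)
  have hzero : ∀ k : Fin M, c k = 0 := by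
    intro k
    have hnn : ∀ k ∈ (Finset.univ : Finset (Fin M)),
        0 ≤ (4 : ℝ) * (c k ^ 2 * (ψ k i * ψ k j)) := by
      intro k _
      have := (hpos k).le
      positivity
    have h := (Finset.sum_eq_zero_iff_of_nonneg hnn).mp hsum k (Finset.mem_univ k)
    have h4 : c k ^ 2 * (ψ k i * ψ k j) = 0 := by linarith
    rcases mul_eq_zero.mp h4 with h | h
    · exact pow_eq_zero_iff (by norm_num) |>.mp h
    · exact absurd h (ne_of_gt (hpos k))
  have hei := ht (twoVec i j 1 0)
  simp only [dot_twoVec, hzero, zero_mul] at hei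
  have hvi0 : twoVec i j (1:ℝ) 0 i = 1 := by simp [twoVec, hij, Ne.symm hij]
  rw [hvi0] at hei
  simp at hei
  linarith

lemma tight_to_ht {M N : ℕ} (Φ : Fin M → Fin N → ℝ) (c : Fin M → ℝ) (A : ℝ)
    (htight : ∀ x : Fin N → ℝ, ∑ k, dot x ((fun k => c k • Φ k) k) ^ 2 = A * dot x x) :
    ∀ x : Fin N → ℝ, ∑ k, (c k * dot x (Φ k)) ^ 2 = A * dot x x := by
  intro x
  rw [← htight x]
  refine Finset.sum_congr rfl (fun k _ => ?_)
  congr 1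
  simp only [dot, Pi.smul_apply, smul_eq_mul, Finset.mul_sum]
  exact Finset.sum_congr rfl (fun t _ => by ring)

/-- Let `Φ = {φ_k}_{k=1}^M` be a frame for `ℝ^N`, `N ≥ 2`. If there is an
orthogonal transformation `T` of `ℝ^N` with `T(φ_k) ∈ ℝ^{N-2} × (0,∞)²` for every `k` (the last
two coordinates of each `T(φ_k)` are strictly positive), then `Φ` is not scalable. In
particular, `Φ` is not scalable if there are `i ≠ j` with `φ_k(i)·φ_k(j) > 0` for all `k`. -/
theorem statement11 {M N : ℕ} (hN : 2 ≤ N) (Φ : Fin M → Fin N → ℝ) (hframe : IsFrame Φ) :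
    ((∃ T : Matrix (Fin N) (Fin N) ℝ, T.transpose * T = 1 ∧ ∀ k : Fin M,
        0 < (T.mulVec (Φ k)) ⟨N - 2, by omega⟩ ∧ 0 < (T.mulVec (Φ k)) ⟨N - 1, by omega⟩) →
      ¬ IsScalable Φ) ∧
    ((∃ i j : Fin N, i ≠ j ∧ ∀ k : Fin M, 0 < Φ k i * Φ k j) → ¬ IsScalable Φ) := by
  constructor
  · rintro ⟨T, hT, hTpos⟩ ⟨c, _, A, hA, htight⟩
    have ht := tight_to_ht Φ c A htight
    have hTT : T * T.transpose = 1 := mul_eq_one_comm.mp hT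
    have ht' : ∀ x : Fin N → ℝ, ∑ k, (c k * dot x (T.mulVec (Φ k))) ^ 2 = A * dot x x := by
      intro x
      have hd : ∀ v : Fin N → ℝ, dot (Matrix.vecMul x T) v = dot x (T.mulVec v) := by
        intro v
        show dotProduct (Matrix.vecMul x T) v = dotProduct x (T.mulVec v)
        rw [Matrix.dotProduct_mulVec]
      have h1 := ht (Matrix.vecMul x T)
      simp only [hd] at h1
      rw [h1]
      congr 1
      rw [← Matrix.mulVec_transpose, Matrix.mulVec_mulVec, hTT, Matrix.one_mulVec]
    have hij : (⟨N - 2, by omega⟩ : Fin N) ≠ ⟨N - 1, by omega⟩ := by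
      intro h
      have := congrArg Fin.val h
      simp only [Fin.val_mk] at this
      omega
    exact key (fun k => T.mulVec (Φ k)) c A hA ht' _ _ hij
      (fun k => mul_pos (hTpos k).1 (hTpos k).2)
  · rintro ⟨i, j, hij, hpos⟩ ⟨c, _, A, hA, htight⟩
    exact key Φ c A hA (tight_to_ht Φ c A htight) i j hij hpos

end ScalableFrames
end
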